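/- The group W^{C∨} = t(P_{B_n}) ⋊ W_0 preserves the affine root subsystem S^{C∨} = O_1 ∪ O_3 ∪ O_5 of type C_n^∨, and its orbits on S^{C∨} are precisely the two sets O_1 ∪ O_3 and O_5: each of these two sets is invariant under every element of W^{C∨}, they are disjoint, and for any two elements a, b in the same set there exists w ∈ W^{C∨} with w(a) = b. -/

import Mathlib

noncomputable section

namespace CvC

/-- Ambient space `F = ℝⁿ ⊕ ℝc`. -/
abbrev F (n : ℕ) := (Fin n → ℝ) × ℝ

/-- Bilinear form `⟨v + rc, w + sc⟩ = v ⬝ w`. -/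
def bform (n : ℕ) (x y : F n) : ℝ := ∑ i, x.1 i * y.1 i

/-- The constant function `c`. -/
def cvec (n : ℕ) : F n := (0, 1)

/-- `eps n i` is the basis vector `ε_i`, for `1 ≤ i ≤ n` (1-based; junk value `0` out of range). -/
def eps (n i : ℕ) : F n :=
  if h : 1 ≤ i ∧ i ≤ n then (Pi.single (⟨i - 1, by omega⟩ : Fin n) 1, 0) else 0

lemma bform_add_left (n : ℕ) (x y z : F n) :
    bform n (x + y) z = bform n x z + bform n y z := by
  simp [bform, add_mul, Finset.sum_add_distrib]

lemma bform_smul_left (n : ℕ) (c : ℝ) (x z : F n) :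
    bform n (c • x) z = c * bform n x z := by
  simp [bform, Finset.mul_sum, mul_assoc]

lemma bform_sub_left (n : ℕ) (x y z : F n) :
    bform n (x - y) z = bform n x z - bform n y z := by
  simp [bform, sub_mul, Finset.sum_sub_distrib]

/-- Reflection `s_f(g) = g − ⟨g, f^∨⟩ f`, `f^∨ = (2/⟨f,f⟩) f`, as a linear endomorphism. -/
def reflMap (n : ℕ) (f : F n) : Module.End ℝ (F n) where
  toFun g := g - ((2 / bform n f f) * bform n g f) • f
  map_add' x y := by
    try dsimp only
    rw [bform_add_left, mul_add, add_smul]; abel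
  map_smul' c x := by
    try dsimp only
    simp only [RingHom.id_apply]
    rw [bform_smul_left, smul_sub, smul_smul, mul_left_comm]

@[simp] lemma reflMap_apply (n : ℕ) (f g : F n) :
    reflMap n f g = g - ((2 / bform n f f) * bform n g f) • f := rfl

lemma reflMap_invol (n : ℕ) (f : F n) (hf : bform n f f ≠ 0) (g : F n) :
    reflMap n f (reflMap n f g) = g := by
  simp only [reflMap_apply]
  rw [bform_sub_left, bform_smul_left, sub_sub, ← add_smul]
  have key : (2 / bform n f f) * bform n g f +
      (2 / bform n f f) * (bform n g f - (2 / bform n f f) * bform n g f * bform n f f) = 0 := by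
    field_simp
    ring
  rw [key, zero_smul, sub_zero]

/-- Translation `t(v)(f) = f − ⟨f, v⟩c`, as a linear endomorphism. -/
def tMap (n : ℕ) (v : Fin n → ℝ) : Module.End ℝ (F n) where
  toFun g := g - bform n g (v, 0) • cvec n
  map_add' x y := by
    try dsimp only
    rw [bform_add_left, add_smul]; abel
  map_smul' c x := by
    try dsimp only
    simp only [RingHom.id_apply]
    rw [bform_smul_left, smul_sub, smul_smul]

@[simp] lemma tMap_apply (n : ℕ) (v : Fin n → ℝ) (g : F n) :
    tMap n v g = g - bform n g (v, 0) • cvec n := rfl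

lemma bform_pair_add (n : ℕ) (g : F n) (v w : Fin n → ℝ) :
    bform n g (v + w, 0) = bform n g (v, 0) + bform n g (w, 0) := by
  simp [bform, mul_add, Finset.sum_add_distrib]

lemma tMap_mul (n : ℕ) (v w : Fin n → ℝ) :
    tMap n v * tMap n w = tMap n (v + w) := by
  apply LinearMap.ext; intro g
  rw [Module.End.mul_apply]
  simp only [tMap_apply]
  rw [bform_sub_left, bform_smul_left]
  have hc : bform n (cvec n) (v, 0) = 0 := by simp [bform, cvec]
  rw [hc, mul_zero, sub_zero, bform_pair_add, add_smul]
  abel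

lemma tMap_zero (n : ℕ) : tMap n 0 = 1 := by
  apply LinearMap.ext; intro g
  rw [Module.End.one_apply, tMap_apply]
  have h0 : bform n g ((0 : Fin n → ℝ), 0) = 0 := by simp [bform]
  rw [h0, zero_smul, sub_zero]

/-- Translation `t(v)` as an invertible endomorphism. -/
def tU (n : ℕ) (v : Fin n → ℝ) : (Module.End ℝ (F n))ˣ where
  val := tMap n v
  inv := tMap n (-v)
  val_inv := by rw [tMap_mul, add_neg_cancel, tMap_zero]
  inv_val := by rw [tMap_mul, neg_add_cancel, tMap_zero]

/-- Reflection `s_f` as an invertible endomorphism (junk value `1` if `⟨f,f⟩ = 0`). -/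
def reflE (n : ℕ) (f : F n) : (Module.End ℝ (F n))ˣ :=
  if hf : bform n f f ≠ 0 then
    { val := reflMap n f
      inv := reflMap n f
      val_inv := by
        apply LinearMap.ext; intro g
        rw [Module.End.mul_apply, Module.End.one_apply]
        exact reflMap_invol n f hf g
      inv_val := by
        apply LinearMap.ext; intro g
        rw [Module.End.mul_apply, Module.End.one_apply]
        exact reflMap_invol n f hf g }
  else 1

/-- The simple affine roots `a_0, a_1, …, a_n` of type `(C_n^∨, C_n)`:
`a_0 = −2ε_1 + c`, `a_j = ε_j − ε_{j+1}` for `1 ≤ j ≤ n−1`, `a_n = 2ε_n`. -/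
def aRootF (n k : ℕ) : F n :=
  if k = 0 then (-(2:ℝ)) • eps n 1 + cvec n
  else if k = n then (2:ℝ) • eps n n
  else eps n k - eps n (k + 1)

/-- The generators `s_0, s_1, …, s_n` of the extended affine Weyl group of type
`(C_n^∨, C_n)`: `s_0 = t(ε_1) ∘ s_{2ε_1}` and `s_i = s_{a_i}` for `1 ≤ i ≤ n`. -/
def sgen (n k : ℕ) : (Module.End ℝ (F n))ˣ :=
  if k = 0 then tU n (eps n 1).1 * reflE n ((2:ℝ) • eps n 1)
  else reflE n (aRootF n k)

/-- The finite Weyl group `W_0 = ⟨s_1, …, s_n⟩` of type `C_n`. -/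
def W0grp (n : ℕ) : Subgroup (Module.End ℝ (F n))ˣ :=
  Subgroup.closure (sgen n '' Set.Icc 1 n)

/-- The extended affine Weyl group `W = ⟨s_0, s_1, …, s_n⟩` of type `(C_n^∨, C_n)`. -/
def Wgrp (n : ℕ) : Subgroup (Module.End ℝ (F n))ˣ :=
  Subgroup.closure (sgen n '' Set.Icc 0 n)

/-- Product of the generators `s_k` along a list of indices. -/
def du (n : ℕ) (l : List ℕ) : (Module.End ℝ (F n))ˣ := (l.map (sgen n)).prod

/-- The weight lattice `P_{C_n} = ℤε_1 ⊕ ⋯ ⊕ ℤε_n` (as a subset of `ℝⁿ`). -/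
def PC (n : ℕ) : Set (Fin n → ℝ) := { v | ∀ i, ∃ m : ℤ, v i = m }

/-- The weight lattice `P_{B_n} = P_{C_n} + ℤ·(1/2)(ε_1 + ⋯ + ε_n)` (as a subset of `ℝⁿ`). -/
def PB (n : ℕ) : Set (Fin n → ℝ) := { v | ∃ k : ℤ, ∀ i, ∃ m : ℤ, v i = m + (k : ℝ)/2 }

/-- `O_1 = {±ε_i + rc}`. -/
def O1 (n : ℕ) : Set (F n) :=
  { x | ∃ i, 1 ≤ i ∧ i ≤ n ∧ ∃ r : ℤ,
      x = eps n i + (r : ℝ) • cvec n ∨ x = -eps n i + (r : ℝ) • cvec n }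

/-- `O_2 = {±2ε_i + 2rc}`. -/
def O2 (n : ℕ) : Set (F n) :=
  { x | ∃ i, 1 ≤ i ∧ i ≤ n ∧ ∃ r : ℤ,
      x = (2:ℝ) • eps n i + ((2*r : ℤ) : ℝ) • cvec n ∨
      x = -((2:ℝ) • eps n i) + ((2*r : ℤ) : ℝ) • cvec n }

/-- `O_3 = {±ε_i + (r + 1/2)c}`. -/
def O3 (n : ℕ) : Set (F n) :=
  { x | ∃ i, 1 ≤ i ∧ i ≤ n ∧ ∃ r : ℤ,
      x = eps n i + ((r : ℝ) + 1/2) • cvec n ∨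
      x = -eps n i + ((r : ℝ) + 1/2) • cvec n }

/-- `O_4 = {±2ε_i + (2r+1)c}`. -/
def O4 (n : ℕ) : Set (F n) :=
  { x | ∃ i, 1 ≤ i ∧ i ≤ n ∧ ∃ r : ℤ,
      x = (2:ℝ) • eps n i + ((2*r+1 : ℤ) : ℝ) • cvec n ∨
      x = -((2:ℝ) • eps n i) + ((2*r+1 : ℤ) : ℝ) • cvec n }

/-- `O_5 = {±ε_i ± ε_j + rc, i < j}`. -/
def O5 (n : ℕ) : Set (F n) :=
  { x | ∃ i j, 1 ≤ i ∧ i < j ∧ j ≤ n ∧ ∃ r : ℤ,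
      x = eps n i + eps n j + (r : ℝ) • cvec n ∨
      x = eps n i - eps n j + (r : ℝ) • cvec n ∨
      x = -eps n i + eps n j + (r : ℝ) • cvec n ∨
      x = -eps n i - eps n j + (r : ℝ) • cvec n }

/-- The five `W`-orbits `O_1, …, O_5` of the affine root system of type `(C_n^∨, C_n)`. -/
def OO (n : ℕ) : Fin 5 → Set (F n) := ![O1 n, O2 n, O3 n, O4 n, O5 n]

/-- The affine root system `S` of type `(C_n^∨, C_n)`. -/
def Sset (n : ℕ) : Set (F n) := O1 n ∪ O2 n ∪ O3 n ∪ O4 n ∪ O5 n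

/-- The set `R̃₊ = {ε_i} ∪ {2ε_i} ∪ {ε_i ± ε_j : i < j}`. -/
def Rtplus (n : ℕ) : Set (F n) :=
  { x | (∃ i, 1 ≤ i ∧ i ≤ n ∧ (x = eps n i ∨ x = (2:ℝ) • eps n i)) ∨
        (∃ i j, 1 ≤ i ∧ i < j ∧ j ≤ n ∧ (x = eps n i + eps n j ∨ x = eps n i - eps n j)) }

/-- The set of positive affine roots `S⁺`. -/
def Splus (n : ℕ) : Set (F n) :=
  { x ∈ Sset n | 0 < x.2 } ∪ (Sset n ∩ Rtplus n)

lemma sum_single_mul (n : ℕ) (j : Fin n) (v : Fin n → ℝ) :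
    ∑ k, v k * (Pi.single j 1 : Fin n → ℝ) k = v j := by
  rw [Finset.sum_eq_single j]
  · simp
  · intro k _ hk
    simp [Pi.single_apply, hk]
  · intro h; exact absurd (Finset.mem_univ j) h

lemma bform_eps_right (n : ℕ) (x : F n) (i : ℕ) (h1 : 1 ≤ i) (h2 : i ≤ n) :
    bform n x (eps n i) = x.1 ⟨i - 1, by omega⟩ := by
  unfold bform eps
  rw [dif_pos ⟨h1, h2⟩]
  exact sum_single_mul n _ x.1

lemma bform_eps_eps (n i : ℕ) (h1 : 1 ≤ i) (h2 : i ≤ n) :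
    bform n (eps n i) (eps n i) = 1 := by
  rw [bform_eps_right n _ i h1 h2]
  unfold eps
  rw [dif_pos ⟨h1, h2⟩]
  simp

/-- `π^{C∨} = π^D`: the linear map with `ε_1 ↦ c − ε_1`, `ε_i ↦ ε_i` (`i ≥ 2`), `c ↦ c`. -/
def piCMap (n : ℕ) : Module.End ℝ (F n) where
  toFun g := g - bform n g (eps n 1) • ((2:ℝ) • eps n 1 - cvec n)
  map_add' x y := by
    try dsimp only
    rw [bform_add_left, add_smul]; abel
  map_smul' c x := by
    try dsimp only
    simp only [RingHom.id_apply]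
    rw [bform_smul_left, smul_sub c, smul_smul]

@[simp] lemma piCMap_apply (n : ℕ) (g : F n) :
    piCMap n g = g - bform n g (eps n 1) • ((2:ℝ) • eps n 1 - cvec n) := rfl

lemma piCMap_invol (n : ℕ) (g : F n) : piCMap n (piCMap n g) = g := by
  rcases Nat.eq_zero_or_pos n with h0 | hpos
  · subst h0
    have he : eps 0 1 = 0 := by simp [eps]
    simp [piCMap_apply, he, bform]
  · have hE := bform_eps_eps n 1 le_rfl hpos
    have hc : bform n (cvec n) (eps n 1) = 0 := by simp [bform, cvec]
    simp only [piCMap_apply]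
    rw [bform_sub_left, bform_smul_left, bform_sub_left, bform_smul_left, hE, hc]
    rw [sub_sub, ← add_smul]
    have key : bform n g (eps n 1) +
        (bform n g (eps n 1) - bform n g (eps n 1) * (2 * 1 - 0)) = 0 := by ring
    rw [key, zero_smul, sub_zero]

/-- `π^{C∨}` as an invertible endomorphism. -/
def piCU (n : ℕ) : (Module.End ℝ (F n))ˣ where
  val := piCMap n
  inv := piCMap n
  val_inv := by
    apply LinearMap.ext; intro g
    rw [Module.End.mul_apply, Module.End.one_apply]
    exact piCMap_invol n g
  inv_val := by
    apply LinearMap.ext; intro g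
    rw [Module.End.mul_apply, Module.End.one_apply]
    exact piCMap_invol n g

/-- `π^{B∨}`: the linear map with `ε_i ↦ (1/2)c − ε_{n−i+1}` and `c ↦ c`. -/
def piBMap (n : ℕ) : Module.End ℝ (F n) where
  toFun g := (fun i => -(g.1 (Fin.rev i)), g.2 + (1/2) * ∑ i, g.1 i)
  map_add' x y := by
    try dsimp only
    refine Prod.ext ?_ ?_
    · funext i; simp [neg_add]; ring
    · simp [Finset.sum_add_distrib]; ring
  map_smul' c x := by
    try dsimp only
    simp only [RingHom.id_apply]
    refine Prod.ext ?_ ?_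
    · funext i; simp [mul_comm]
    · simp only [Prod.smul_snd, Prod.smul_fst, Pi.smul_apply, smul_eq_mul, Finset.mul_sum,
        mul_add]
      congr 1
      exact Finset.sum_congr rfl fun i _ => by ring

@[simp] lemma piBMap_apply (n : ℕ) (g : F n) :
    piBMap n g = (fun i => -(g.1 (Fin.rev i)), g.2 + (1/2) * ∑ i, g.1 i) := rfl

lemma piBMap_invol (n : ℕ) (g : F n) : piBMap n (piBMap n g) = g := by
  simp only [piBMap_apply]
  refine Prod.ext ?_ ?_
  · funext i; simp
  · have h : ∑ i, -(g.1 (Fin.rev i)) = -∑ i, g.1 i := by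
      rw [← Finset.sum_neg_distrib]
      exact Equiv.sum_comp (Equiv.mk Fin.rev Fin.rev Fin.rev_rev Fin.rev_rev) (fun i => -(g.1 i))
    dsimp only
    rw [h]
    ring

/-- `π^{B∨}` as an invertible endomorphism. -/
def piBU (n : ℕ) : (Module.End ℝ (F n))ˣ where
  val := piBMap n
  inv := piBMap n
  val_inv := by
    apply LinearMap.ext; intro g
    rw [Module.End.mul_apply, Module.End.one_apply]
    exact piBMap_invol n g
  inv_val := by
    apply LinearMap.ext; intro g
    rw [Module.End.mul_apply, Module.End.one_apply]
    exact piBMap_invol n g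

/-- The affine root `a_0^{C∨} = −(ε_1 + ε_2) + c` of Ram–Yip type `C_n^∨`. -/
def a0C (n : ℕ) : F n := -(eps n 1 + eps n 2) + cvec n

/-- The reflection `s_0^{C∨} = s_{a_0^{C∨}}`. -/
def s0C (n : ℕ) : (Module.End ℝ (F n))ˣ := reflE n (a0C n)

/-- The extended affine Weyl group of Ram–Yip type `C_n^∨`:
`W^{C∨,RY} = ⟨s_0^{C∨}, s_1, …, s_n, π^{C∨}⟩`. -/
def WCRY (n : ℕ) : Subgroup (Module.End ℝ (F n))ˣ :=
  Subgroup.closure ({s0C n, piCU n} ∪ sgen n '' Set.Icc 1 n)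

/-- The extended affine Weyl group of Ram–Yip type `B_n^∨`:
`W^{B∨,RY} = ⟨s_0, s_1, …, s_n, π^{B∨}⟩`. -/
def WBRY (n : ℕ) : Subgroup (Module.End ℝ (F n))ˣ :=
  Subgroup.closure (insert (piBU n) (sgen n '' Set.Icc 0 n))

/-- The subgroup generated by `W_0` together with all the translations `t(μ)`, `μ ∈ P_{B_n}`. -/
def WBtrans (n : ℕ) : Subgroup (Module.End ℝ (F n))ˣ :=
  Subgroup.closure ((sgen n '' Set.Icc 1 n) ∪ (tU n '' PB n))

/-- The defining relators of the extended affine Weyl group of type `(C_n^∨, C_n)`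
on the generators `σ_0, …, σ_n`. -/
def rels (n : ℕ) : Set (FreeGroup (Fin (n + 1))) :=
  { r | (∃ i : Fin (n+1), r = FreeGroup.of i * FreeGroup.of i) ∨
        (∃ i j : Fin (n+1), ((i:ℕ) + 1 < (j:ℕ) ∨ (j:ℕ) + 1 < (i:ℕ)) ∧
          r = FreeGroup.of i * FreeGroup.of j * (FreeGroup.of i)⁻¹ * (FreeGroup.of j)⁻¹) ∨
        (∃ i j : Fin (n+1), 1 ≤ (i:ℕ) ∧ (i:ℕ) ≤ n - 2 ∧ (j:ℕ) = (i:ℕ) + 1 ∧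
          r = FreeGroup.of i * FreeGroup.of j * FreeGroup.of i *
              ((FreeGroup.of j)⁻¹ * (FreeGroup.of i)⁻¹ * (FreeGroup.of j)⁻¹)) ∨
        (∃ i j : Fin (n+1), ((i:ℕ) = 0 ∨ (i:ℕ) = n - 1) ∧ (j:ℕ) = (i:ℕ) + 1 ∧
          r = FreeGroup.of i * FreeGroup.of j * FreeGroup.of i * FreeGroup.of j *
              ((FreeGroup.of i)⁻¹ * (FreeGroup.of j)⁻¹ * (FreeGroup.of i)⁻¹ *
                (FreeGroup.of j)⁻¹)) }


/-- The group `W^{C∨} = t(P_{B_n}) ⋊ W_0`, generated by `W_0` and the translations `t(μ)`,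
`μ ∈ P_{B_n}`. -/
def WCvee (n : ℕ) : Subgroup (Module.End ℝ (F n))ˣ :=
  Subgroup.closure ((sgen n '' Set.Icc 1 n) ∪ (tU n '' PB n))

section Aux

variable {n : ℕ}

/-- basis vector with `Fin` index -/
def Ev (n : ℕ) (j : Fin n) : F n := (Pi.single j (1:ℝ), 0)

@[simp] lemma Ev_fst (j : Fin n) : (Ev n j).1 = Pi.single j (1:ℝ) := rfl
@[simp] lemma Ev_snd (j : Fin n) : (Ev n j).2 = 0 := rfl

lemma eps_eq_Ev {i : ℕ} (h1 : 1 ≤ i) (h2 : i ≤ n) {j : Fin n} (hj : (j : ℕ) = i - 1) :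
    eps n i = Ev n j := by
  have hm : (⟨i - 1, by omega⟩ : Fin n) = j := Fin.ext (show i - 1 = (j:ℕ) by omega)
  unfold eps Ev
  rw [dif_pos ⟨h1, h2⟩, hm]

lemma bform_Ev (x : F n) (j : Fin n) : bform n x (Ev n j) = x.1 j :=
  sum_single_mul n j x.1

lemma sum_smul_single_mul (σ : ℝ) (j : Fin n) (v : Fin n → ℝ) :
    ∑ i, (σ • (Pi.single j (1:ℝ) : Fin n → ℝ)) i * v i = σ * v j := by
  have h : ∀ i ∈ Finset.univ, (σ • (Pi.single j (1:ℝ) : Fin n → ℝ)) i * v i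
      = σ * (v i * (Pi.single j (1:ℝ) : Fin n → ℝ) i) := by
    intro i _
    simp only [Pi.smul_apply, smul_eq_mul]
    ring
  rw [Finset.sum_congr rfl h, ← Finset.mul_sum, sum_single_mul]

lemma sum_pair_mul (σ τ : ℝ) (j k : Fin n) (v : Fin n → ℝ) :
    ∑ i, (σ • (Pi.single j (1:ℝ) : Fin n → ℝ) + τ • (Pi.single k (1:ℝ) : Fin n → ℝ)) i * v i
      = σ * v j + τ * v k := by
  have h : ∀ i ∈ Finset.univ, (σ • (Pi.single j (1:ℝ) : Fin n → ℝ) + τ • (Pi.single k (1:ℝ) : Fin n → ℝ)) i * v i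
      = (σ • (Pi.single j (1:ℝ) : Fin n → ℝ)) i * v i
        + (τ • (Pi.single k (1:ℝ) : Fin n → ℝ)) i * v i := by
    intro i _
    simp only [Pi.add_apply]
    ring
  rw [Finset.sum_congr rfl h, Finset.sum_add_distrib, sum_smul_single_mul, sum_smul_single_mul]

lemma bform_sub_Ev (x : F n) (a b : Fin n) :
    bform n x (Ev n a - Ev n b) = x.1 a - x.1 b := by
  have h : ∀ i ∈ Finset.univ, x.1 i * (Ev n a - Ev n b).1 i
      = x.1 i * (Pi.single a (1:ℝ) : Fin n → ℝ) i - x.1 i * (Pi.single b (1:ℝ) : Fin n → ℝ) i := by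
    intro i _
    simp only [Prod.fst_sub, Pi.sub_apply, Ev_fst]
    ring
  calc bform n x (Ev n a - Ev n b)
      = ∑ i, (x.1 i * (Pi.single a (1:ℝ) : Fin n → ℝ) i - x.1 i * (Pi.single b (1:ℝ) : Fin n → ℝ) i) :=
        Finset.sum_congr rfl h
    _ = _ := by rw [Finset.sum_sub_distrib, sum_single_mul, sum_single_mul]

lemma bform_smul_right (c : ℝ) (x y : F n) : bform n x (c • y) = c * bform n x y := by
  unfold bform
  rw [Finset.mul_sum]
  refine Finset.sum_congr rfl fun i _ => ?_
  simp only [Prod.smul_fst, Pi.smul_apply, smul_eq_mul]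
  ring

lemma bform_EvEv (a b : Fin n) (hab : a ≠ b) :
    bform n (Ev n a - Ev n b) (Ev n a - Ev n b) = 2 := by
  rw [bform_sub_Ev]
  simp only [Prod.fst_sub, Pi.sub_apply, Ev_fst]
  rw [Pi.single_eq_same, Pi.single_eq_same,
    Pi.single_eq_of_ne hab, Pi.single_eq_of_ne hab.symm]
  norm_num

lemma bform_2Ev (a : Fin n) :
    bform n ((2:ℝ) • Ev n a) ((2:ℝ) • Ev n a) = 4 := by
  rw [bform_smul_right, bform_Ev]
  simp only [Prod.smul_fst, Pi.smul_apply, Ev_fst, smul_eq_mul, Pi.single_eq_same]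
  norm_num

lemma refl_swap (a b : Fin n) (hab : a ≠ b) (x : F n) :
    reflMap n (Ev n a - Ev n b) x = (fun i => x.1 (Equiv.swap a b i), x.2) := by
  rw [reflMap_apply, bform_EvEv a b hab, bform_sub_Ev]
  refine Prod.ext ?_ ?_
  · funext i
    simp only [Prod.fst_sub, Prod.smul_fst, Pi.sub_apply, Pi.smul_apply, Ev_fst, smul_eq_mul]
    rw [Equiv.swap_apply_def]
    split_ifs with h1 h2
    · subst h1
      rw [Pi.single_eq_same, Pi.single_eq_of_ne hab]; ring
    · subst h2
      rw [Pi.single_eq_same, Pi.single_eq_of_ne hab.symm]; ring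
    · rw [Pi.single_eq_of_ne h1, Pi.single_eq_of_ne h2]; ring
  · simp only [Prod.snd_sub, Prod.smul_snd, Ev_snd, smul_eq_mul]
    ring

lemma refl_neg (a : Fin n) (x : F n) :
    reflMap n ((2:ℝ) • Ev n a) x = (fun i => if i = a then -x.1 a else x.1 i, x.2) := by
  rw [reflMap_apply, bform_2Ev, bform_smul_right, bform_Ev]
  refine Prod.ext ?_ ?_
  · funext i
    simp only [Prod.fst_sub, Prod.smul_fst, Pi.sub_apply, Pi.smul_apply, Ev_fst, smul_eq_mul]
    by_cases hia : i = a
    · subst hia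
      rw [Pi.single_eq_same, if_pos rfl]; ring
    · rw [Pi.single_eq_of_ne hia, if_neg hia]; ring
  · simp only [Prod.snd_sub, Prod.smul_snd, Ev_snd, smul_eq_mul]
    ring

lemma tMap_eq (v : Fin n → ℝ) (x : F n) :
    tMap n v x = (x.1, x.2 - ∑ i, x.1 i * v i) := by
  rw [tMap_apply]
  refine Prod.ext ?_ ?_
  · funext i
    have hc : (cvec n).1 = (0 : Fin n → ℝ) := rfl
    simp only [Prod.fst_sub, Prod.smul_fst, Pi.sub_apply, Pi.smul_apply, hc, Pi.zero_apply,
      smul_eq_mul]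
    ring
  · have hc : (cvec n).2 = (1 : ℝ) := rfl
    simp only [Prod.snd_sub, Prod.smul_snd, hc, smul_eq_mul, mul_one]
    rfl

end Aux

section Aux2

variable {n : ℕ}

lemma val_mul_apply (u v : (Module.End ℝ (F n))ˣ) (x : F n) :
    ((u * v : (Module.End ℝ (F n))ˣ) : Module.End ℝ (F n)) x
      = (u : Module.End ℝ (F n)) ((v : Module.End ℝ (F n)) x) := by
  rw [Units.val_mul, Module.End.mul_apply]

lemma inv_val_apply (w : (Module.End ℝ (F n))ˣ) (x : F n) :
    ((w⁻¹ : (Module.End ℝ (F n))ˣ) : Module.End ℝ (F n)) ((w : Module.End ℝ (F n)) x) = x := by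
  rw [← val_mul_apply, inv_mul_cancel, Units.val_one, Module.End.one_apply]

lemma val_inv_apply (w : (Module.End ℝ (F n))ˣ) (x : F n) :
    ((w : Module.End ℝ (F n))) (((w⁻¹ : (Module.End ℝ (F n))ˣ) : Module.End ℝ (F n)) x) = x := by
  rw [← val_mul_apply, mul_inv_cancel, Units.val_one, Module.End.one_apply]

lemma reflE_val (f : F n) (hf : bform n f f ≠ 0) :
    ((reflE n f : (Module.End ℝ (F n))ˣ) : Module.End ℝ (F n)) = reflMap n f := by
  rw [reflE, dif_pos hf]

lemma reflE_mul_self (f : F n) : reflE n f * reflE n f = 1 := by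
  by_cases hf : bform n f f ≠ 0
  · apply Units.ext
    rw [Units.val_mul, reflE_val f hf, Units.val_one]
    apply LinearMap.ext; intro g
    rw [Module.End.mul_apply, Module.End.one_apply]
    exact reflMap_invol n f hf g
  · rw [reflE, dif_neg hf, one_mul]

lemma sgen_mul_self (k : ℕ) (hk : 1 ≤ k) : sgen n k * sgen n k = 1 := by
  rw [sgen, if_neg (by omega)]
  exact reflE_mul_self _

lemma sgen_mem (k : ℕ) (h1 : 1 ≤ k) (h2 : k ≤ n) : sgen n k ∈ WCvee n :=
  Subgroup.subset_closure (Or.inl ⟨k, ⟨h1, h2⟩, rfl⟩)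

lemma tU_mem {v : Fin n → ℝ} (hv : v ∈ PB n) : tU n v ∈ WCvee n :=
  Subgroup.subset_closure (Or.inr ⟨v, hv, rfl⟩)

lemma neg_mem_PB {v : Fin n → ℝ} (hv : v ∈ PB n) : -v ∈ PB n := by
  obtain ⟨K, hK⟩ := hv
  refine ⟨-K, fun i => ?_⟩
  obtain ⟨m, hm⟩ := hK i
  exact ⟨-m, by rw [Pi.neg_apply, hm]; push_cast; ring⟩

lemma sgen_adj (a b : Fin n) (hab : (b : ℕ) = (a : ℕ) + 1) (x : F n) :
    ((sgen n ((a : ℕ) + 1) : (Module.End ℝ (F n))ˣ) : Module.End ℝ (F n)) x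
      = (fun i => x.1 (Equiv.swap a b i), x.2) := by
  have hb := b.isLt
  have hne : a ≠ b := fun h => by rw [h] at hab; omega
  rw [sgen, if_neg (by omega), aRootF, if_neg (by omega), if_neg (by omega),
    eps_eq_Ev (i := (a:ℕ)+1) (by omega) (by omega) (j := a) (by omega),
    eps_eq_Ev (i := (a:ℕ)+1+1) (by omega) (by omega) (j := b) (by omega),
    reflE_val _ (by rw [bform_EvEv a b hne]; norm_num)]
  exact refl_swap a b hne x

lemma sgen_last (hn : 1 ≤ n) (t : Fin n) (ht : (t : ℕ) = n - 1) (x : F n) :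
    ((sgen n n : (Module.End ℝ (F n))ˣ) : Module.End ℝ (F n)) x
      = (fun i => if i = t then -x.1 t else x.1 i, x.2) := by
  rw [sgen, if_neg (by omega), aRootF, if_neg (by omega), if_pos rfl,
    eps_eq_Ev (i := n) hn le_rfl (j := t) (by omega),
    reflE_val _ (by rw [bform_2Ev]; norm_num)]
  exact refl_neg t x

lemma single_swap (a b j i : Fin n) :
    (Pi.single j (1:ℝ) : Fin n → ℝ) (Equiv.swap a b i)
      = (Pi.single (Equiv.swap a b j) (1:ℝ) : Fin n → ℝ) i := by
  by_cases h : i = Equiv.swap a b j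
  · subst h
    rw [Equiv.swap_apply_self, Pi.single_eq_same, Pi.single_eq_same]
  · have h2 : Equiv.swap a b i ≠ j := fun hc => h (by rw [← hc, Equiv.swap_apply_self])
    rw [Pi.single_eq_of_ne h2, Pi.single_eq_of_ne h]

end Aux2

section Aux3

variable {n : ℕ}

def S13 (n : ℕ) : Set (F n) :=
  {x | ∃ (j : Fin n) (σ : ℝ) (p : ℤ), (σ = 1 ∨ σ = -1) ∧
    x = (σ • (Pi.single j (1:ℝ) : Fin n → ℝ), (p : ℝ)/2)}

def S5 (n : ℕ) : Set (F n) :=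
  {x | ∃ (j k : Fin n) (σ τ : ℝ) (r : ℤ), j ≠ k ∧ (σ = 1 ∨ σ = -1) ∧ (τ = 1 ∨ τ = -1) ∧
    x = (σ • (Pi.single j (1:ℝ) : Fin n → ℝ) + τ • (Pi.single k (1:ℝ) : Fin n → ℝ), (r : ℝ))}

lemma Ev_add_c (j : Fin n) (t : ℝ) : Ev n j + t • cvec n = ((Pi.single j (1:ℝ) : Fin n → ℝ), t) := by
  refine Prod.ext ?_ ?_
  · funext i
    have hc : (cvec n).1 = (0 : Fin n → ℝ) := rfl
    simp [hc]
  · have hc : (cvec n).2 = (1:ℝ) := rfl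
    simp [hc]

lemma negEv_add_c (j : Fin n) (t : ℝ) :
    -Ev n j + t • cvec n = (-(Pi.single j (1:ℝ) : Fin n → ℝ), t) := by
  refine Prod.ext ?_ ?_
  · funext i
    have hc : (cvec n).1 = (0 : Fin n → ℝ) := rfl
    simp [hc]
  · have hc : (cvec n).2 = (1:ℝ) := rfl
    simp [hc]

lemma O13_eq : O1 n ∪ O3 n = S13 n := by
  ext x
  constructor
  · rintro (⟨i, h1, h2, r, h | h⟩ | ⟨i, h1, h2, r, h | h⟩) <;>
      rw [eps_eq_Ev h1 h2 (j := ⟨i - 1, by omega⟩) rfl] at h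
    · refine ⟨⟨i-1, by omega⟩, 1, 2*r, Or.inl rfl, ?_⟩
      rw [h, Ev_add_c, one_smul]
      refine Prod.ext rfl ?_
      push_cast; ring
    · refine ⟨⟨i-1, by omega⟩, -1, 2*r, Or.inr rfl, ?_⟩
      rw [h, negEv_add_c, neg_one_smul]
      refine Prod.ext rfl ?_
      push_cast; ring
    · refine ⟨⟨i-1, by omega⟩, 1, 2*r+1, Or.inl rfl, ?_⟩
      rw [h, Ev_add_c, one_smul]
      refine Prod.ext rfl ?_
      push_cast; ring
    · refine ⟨⟨i-1, by omega⟩, -1, 2*r+1, Or.inr rfl, ?_⟩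
      rw [h, negEv_add_c, neg_one_smul]
      refine Prod.ext rfl ?_
      push_cast; ring
  · rintro ⟨j, σ, p, hσ, rfl⟩
    have h1 : 1 ≤ (j:ℕ) + 1 := by omega
    have h2 : (j:ℕ) + 1 ≤ n := j.isLt
    have he : eps n ((j:ℕ)+1) = Ev n j := eps_eq_Ev h1 h2 (by omega)
    rcases Int.even_or_odd p with ⟨r, hr⟩ | ⟨r, hr⟩
    · left
      refine ⟨(j:ℕ)+1, h1, h2, r, ?_⟩
      rcases hσ with rfl | rfl
      · left
        rw [he, Ev_add_c, one_smul]
        refine Prod.ext rfl ?_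
        rw [hr]; push_cast; ring
      · right
        rw [he, negEv_add_c, neg_one_smul]
        refine Prod.ext rfl ?_
        rw [hr]; push_cast; ring
    · right
      refine ⟨(j:ℕ)+1, h1, h2, r, ?_⟩
      rcases hσ with rfl | rfl
      · left
        rw [he, Ev_add_c, one_smul]
        refine Prod.ext rfl ?_
        rw [hr]; push_cast; ring
      · right
        rw [he, negEv_add_c, neg_one_smul]
        refine Prod.ext rfl ?_
        rw [hr]; push_cast; ring

lemma pair_add_c (s t : ℝ) (j k : Fin n) (ρ : ℝ) :
    s • Ev n j + t • Ev n k + ρ • cvec n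
      = (s • (Pi.single j (1:ℝ) : Fin n → ℝ) + t • (Pi.single k (1:ℝ) : Fin n → ℝ), ρ) := by
  refine Prod.ext ?_ ?_
  · funext i
    have hc : (cvec n).1 = (0 : Fin n → ℝ) := rfl
    simp [hc]
  · have hc : (cvec n).2 = (1:ℝ) := rfl
    simp [hc]

end Aux3

section Aux3b

variable {n : ℕ}

lemma he1 (j k : Fin n) (ρ : ℝ) : Ev n j + Ev n k + ρ • cvec n
    = ((Pi.single j (1:ℝ) : Fin n → ℝ) + (Pi.single k (1:ℝ) : Fin n → ℝ), ρ) := by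
  refine Prod.ext ?_ ?_ <;>
    · have hc1 : (cvec n).1 = (0 : Fin n → ℝ) := rfl
      have hc2 : (cvec n).2 = (1:ℝ) := rfl
      simp [hc1, hc2]

lemma he2 (j k : Fin n) (ρ : ℝ) : Ev n j - Ev n k + ρ • cvec n
    = ((Pi.single j (1:ℝ) : Fin n → ℝ) - (Pi.single k (1:ℝ) : Fin n → ℝ), ρ) := by
  refine Prod.ext ?_ ?_ <;>
    · have hc1 : (cvec n).1 = (0 : Fin n → ℝ) := rfl
      have hc2 : (cvec n).2 = (1:ℝ) := rfl
      simp [hc1, hc2]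

lemma he3 (j k : Fin n) (ρ : ℝ) : -Ev n j + Ev n k + ρ • cvec n
    = (-(Pi.single j (1:ℝ) : Fin n → ℝ) + (Pi.single k (1:ℝ) : Fin n → ℝ), ρ) := by
  refine Prod.ext ?_ ?_ <;>
    · have hc1 : (cvec n).1 = (0 : Fin n → ℝ) := rfl
      have hc2 : (cvec n).2 = (1:ℝ) := rfl
      simp [hc1, hc2]

lemma he4 (j k : Fin n) (ρ : ℝ) : -Ev n j - Ev n k + ρ • cvec n
    = (-(Pi.single j (1:ℝ) : Fin n → ℝ) - (Pi.single k (1:ℝ) : Fin n → ℝ), ρ) := by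
  refine Prod.ext ?_ ?_ <;>
    · have hc1 : (cvec n).1 = (0 : Fin n → ℝ) := rfl
      have hc2 : (cvec n).2 = (1:ℝ) := rfl
      simp [hc1, hc2]

lemma O5_eq : O5 n = S5 n := by
  ext x
  constructor
  · rintro ⟨i, j, h1, hij, h2, r, h | h | h | h⟩ <;>
      rw [eps_eq_Ev (by omega) (by omega : i ≤ n) (j := ⟨i - 1, by omega⟩) rfl,
        eps_eq_Ev (by omega : 1 ≤ j) h2 (j := ⟨j - 1, by omega⟩) rfl] at h <;>
      [ (refine ⟨⟨i-1, by omega⟩, ⟨j-1, by omega⟩, 1, 1, r,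
          Fin.ne_of_val_ne (show i-1 ≠ j-1 by omega), Or.inl rfl, Or.inl rfl, ?_⟩;
         rw [h, he1]);
        (refine ⟨⟨i-1, by omega⟩, ⟨j-1, by omega⟩, 1, -1, r,
          Fin.ne_of_val_ne (show i-1 ≠ j-1 by omega), Or.inl rfl, Or.inr rfl, ?_⟩;
         rw [h, he2]);
        (refine ⟨⟨i-1, by omega⟩, ⟨j-1, by omega⟩, -1, 1, r,
          Fin.ne_of_val_ne (show i-1 ≠ j-1 by omega), Or.inr rfl, Or.inl rfl, ?_⟩;
         rw [h, he3]);
        (refine ⟨⟨i-1, by omega⟩, ⟨j-1, by omega⟩, -1, -1, r,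
          Fin.ne_of_val_ne (show i-1 ≠ j-1 by omega), Or.inr rfl, Or.inr rfl, ?_⟩;
         rw [h, he4])] <;>
      · refine Prod.ext ?_ rfl
        module
  · rintro ⟨j, k, σ, τ, r, hjk, hσ, hτ, rfl⟩
    have hj1 : 1 ≤ (j:ℕ) + 1 := by omega
    have hj2 : (j:ℕ) + 1 ≤ n := j.isLt
    have hk2 : (k:ℕ) + 1 ≤ n := k.isLt
    have hej : eps n ((j:ℕ)+1) = Ev n j := eps_eq_Ev hj1 hj2 (by omega)
    have hek : eps n ((k:ℕ)+1) = Ev n k := eps_eq_Ev (by omega) hk2 (by omega)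
    rcases lt_or_gt_of_ne (fun h => hjk (Fin.ext h) : (j:ℕ) ≠ (k:ℕ)) with hlt | hgt
    · refine ⟨(j:ℕ)+1, (k:ℕ)+1, hj1, by omega, hk2, r, ?_⟩
      rcases hσ with rfl | rfl <;> rcases hτ with rfl | rfl
      · exact Or.inl (by rw [hej, hek, he1]; refine Prod.ext ?_ rfl; module)
      · exact Or.inr (Or.inl (by rw [hej, hek, he2]; refine Prod.ext ?_ rfl; module))
      · exact Or.inr (Or.inr (Or.inl (by rw [hej, hek, he3]; refine Prod.ext ?_ rfl; module)))
      · exact Or.inr (Or.inr (Or.inr (by rw [hej, hek, he4]; refine Prod.ext ?_ rfl; module)))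
    · refine ⟨(k:ℕ)+1, (j:ℕ)+1, by omega, by omega, hj2, r, ?_⟩
      rcases hσ with rfl | rfl <;> rcases hτ with rfl | rfl
      · exact Or.inl (by rw [hek, hej, he1]; refine Prod.ext ?_ rfl; module)
      · exact Or.inr (Or.inr (Or.inl (by rw [hek, hej, he3]; refine Prod.ext ?_ rfl; module)))
      · exact Or.inr (Or.inl (by rw [hek, hej, he2]; refine Prod.ext ?_ rfl; module))
      · exact Or.inr (Or.inr (Or.inr (by rw [hek, hej, he4]; refine Prod.ext ?_ rfl; module)))

end Aux3b

section Aux4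

variable {n : ℕ}

lemma S13_sgen (k : ℕ) (h1 : 1 ≤ k) (h2 : k ≤ n) {x : F n} (hx : x ∈ S13 n) :
    ((sgen n k : (Module.End ℝ (F n))ˣ) : Module.End ℝ (F n)) x ∈ S13 n := by
  obtain ⟨j, σ, p, hσ, rfl⟩ := hx
  rcases eq_or_lt_of_le h2 with rfl | hk
  · -- k = n : sign change at last coordinate
    set t : Fin k := ⟨k - 1, by omega⟩ with hts
    rw [sgen_last h1 t (by simp [hts])]
    by_cases hj : j = t
    · subst hj
      refine ⟨t, -σ, p, by rcases hσ with rfl | rfl <;> norm_num, ?_⟩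
      refine Prod.ext ?_ rfl
      funext i
      by_cases hit : i = t
      · subst hit
        simp [Pi.single_eq_same]
      · simp [hit, Pi.single_eq_of_ne hit]
    · refine ⟨j, σ, p, hσ, ?_⟩
      refine Prod.ext ?_ rfl
      funext i
      by_cases hit : i = t
      · subst hit
        have htj : t ≠ j := fun h => hj h.symm
        simp [Pi.single_eq_of_ne htj]
      · simp [hit]
  · -- k < n : adjacent transposition
    set a : Fin n := ⟨k - 1, by omega⟩ with has
    set b : Fin n := ⟨k, hk⟩ with hbs
    have hk' : k = (a:ℕ) + 1 := by simp [has]; omega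
    rw [hk', sgen_adj a b (by simp [has, hbs]; omega)]
    refine ⟨Equiv.swap a b j, σ, p, hσ, ?_⟩
    refine Prod.ext ?_ rfl
    funext i
    simp only [Pi.smul_apply, smul_eq_mul]
    rw [single_swap]

lemma S13_t {v : Fin n → ℝ} (hv : v ∈ PB n) {x : F n} (hx : x ∈ S13 n) :
    tMap n v x ∈ S13 n := by
  obtain ⟨j, σ, p, hσ, rfl⟩ := hx
  obtain ⟨K, hK⟩ := hv
  obtain ⟨m, hm⟩ := hK j
  rw [tMap_eq]
  rcases hσ with rfl | rfl
  · refine ⟨j, 1, p - (2*m + K), Or.inl rfl, ?_⟩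
    refine Prod.ext rfl ?_
    show (p:ℝ)/2 - ∑ i, ((1:ℝ) • (Pi.single j (1:ℝ) : Fin n → ℝ)) i * v i = _
    rw [sum_smul_single_mul, hm]
    push_cast; ring
  · refine ⟨j, -1, p + (2*m + K), Or.inr rfl, ?_⟩
    refine Prod.ext rfl ?_
    show (p:ℝ)/2 - ∑ i, ((-1:ℝ) • (Pi.single j (1:ℝ) : Fin n → ℝ)) i * v i = _
    rw [sum_smul_single_mul, hm]
    push_cast; ring

lemma S5_sgen (k : ℕ) (h1 : 1 ≤ k) (h2 : k ≤ n) {x : F n} (hx : x ∈ S5 n) :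
    ((sgen n k : (Module.End ℝ (F n))ˣ) : Module.End ℝ (F n)) x ∈ S5 n := by
  obtain ⟨j, l, σ, τ, r, hjl, hσ, hτ, rfl⟩ := hx
  rcases eq_or_lt_of_le h2 with rfl | hk
  · set t : Fin k := ⟨k - 1, by omega⟩ with hts
    rw [sgen_last h1 t (by simp [hts])]
    by_cases hj : j = t
    · subst hj
      refine ⟨t, l, -σ, τ, r, hjl, by rcases hσ with rfl | rfl <;> norm_num, hτ, ?_⟩
      refine Prod.ext ?_ rfl
      funext i
      by_cases hit : i = t
      · subst hit
        simp [Pi.single_eq_same, Pi.single_eq_of_ne hjl]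
      · simp [hit, Pi.single_eq_of_ne hit]
    · by_cases hl : l = t
      · subst hl
        refine ⟨j, t, σ, -τ, r, hjl, hσ, by rcases hτ with rfl | rfl <;> norm_num, ?_⟩
        refine Prod.ext ?_ rfl
        funext i
        by_cases hit : i = t
        · subst hit
          simp [Pi.single_eq_same, Pi.single_eq_of_ne hjl.symm]
        · simp [hit, Pi.single_eq_of_ne hit]
      · refine ⟨j, l, σ, τ, r, hjl, hσ, hτ, ?_⟩
        refine Prod.ext ?_ rfl
        funext i
        by_cases hit : i = t
        · subst hit
          have h1' : t ≠ j := fun h => hj h.symm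
          have h2' : t ≠ l := fun h => hl h.symm
          simp [Pi.single_eq_of_ne h1', Pi.single_eq_of_ne h2']
        · simp [hit]
  · set a : Fin n := ⟨k - 1, by omega⟩ with has
    set b : Fin n := ⟨k, hk⟩ with hbs
    have hk' : k = (a:ℕ) + 1 := by simp [has]; omega
    rw [hk', sgen_adj a b (by simp [has, hbs]; omega)]
    refine ⟨Equiv.swap a b j, Equiv.swap a b l, σ, τ, r,
      (Equiv.swap a b).injective.ne hjl, hσ, hτ, ?_⟩
    refine Prod.ext ?_ rfl
    funext i
    simp only [Pi.add_apply, Pi.smul_apply, smul_eq_mul]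
    rw [single_swap, single_swap]

lemma S5_t {v : Fin n → ℝ} (hv : v ∈ PB n) {x : F n} (hx : x ∈ S5 n) :
    tMap n v x ∈ S5 n := by
  obtain ⟨j, l, σ, τ, r, hjl, hσ, hτ, rfl⟩ := hx
  obtain ⟨K, hK⟩ := hv
  obtain ⟨m1, hm1⟩ := hK j
  obtain ⟨m2, hm2⟩ := hK l
  rw [tMap_eq]
  have hs : ∑ i, (σ • (Pi.single j (1:ℝ) : Fin n → ℝ)
      + τ • (Pi.single l (1:ℝ) : Fin n → ℝ), (r:ℝ)).1 i * v i = σ * v j + τ * v l :=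
    sum_pair_mul σ τ j l v
  rcases hσ with rfl | rfl <;> rcases hτ with rfl | rfl
  · refine ⟨j, l, 1, 1, r - (m1 + m2 + K), hjl, Or.inl rfl, Or.inl rfl, ?_⟩
    refine Prod.ext rfl ?_
    rw [hs, hm1, hm2]; push_cast; ring
  · refine ⟨j, l, 1, -1, r - (m1 - m2), hjl, Or.inl rfl, Or.inr rfl, ?_⟩
    refine Prod.ext rfl ?_
    rw [hs, hm1, hm2]; push_cast; ring
  · refine ⟨j, l, -1, 1, r - (m2 - m1), hjl, Or.inr rfl, Or.inl rfl, ?_⟩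
    refine Prod.ext rfl ?_
    rw [hs, hm1, hm2]; push_cast; ring
  · refine ⟨j, l, -1, -1, r + (m1 + m2 + K), hjl, Or.inr rfl, Or.inr rfl, ?_⟩
    refine Prod.ext rfl ?_
    rw [hs, hm1, hm2]; push_cast; ring

end Aux4

section Aux5

variable {n : ℕ}

lemma gen_iff_aux {P : Set (F n)}
    (hsg : ∀ k, 1 ≤ k → k ≤ n → ∀ x : F n, x ∈ P →
      ((sgen n k : (Module.End ℝ (F n))ˣ) : Module.End ℝ (F n)) x ∈ P)
    (htr : ∀ v : Fin n → ℝ, v ∈ PB n → ∀ x : F n, x ∈ P → tMap n v x ∈ P) :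
    ∀ w ∈ WCvee n, ∀ x : F n, (w : Module.End ℝ (F n)) x ∈ P ↔ x ∈ P := by
  intro w hw
  refine Subgroup.closure_induction (k := (sgen n '' Set.Icc 1 n) ∪ (tU n '' PB n))
    (p := fun (g : (Module.End ℝ (F n))ˣ) _ => ∀ x : F n, (g : Module.End ℝ (F n)) x ∈ P ↔ x ∈ P)
    ?_ ?_ ?_ ?_ hw
  · rintro g (⟨k, ⟨h1, h2⟩, rfl⟩ | ⟨v, hv, rfl⟩)
    · intro x
      constructor
      · intro h
        have hfix : ((sgen n k : (Module.End ℝ (F n))ˣ) : Module.End ℝ (F n))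
            (((sgen n k : (Module.End ℝ (F n))ˣ) : Module.End ℝ (F n)) x) = x := by
          rw [← val_mul_apply, sgen_mul_self k h1, Units.val_one, Module.End.one_apply]
        exact hfix ▸ hsg k h1 h2 _ h
      · exact hsg k h1 h2 x
    · intro x
      have hval : ((tU n v : (Module.End ℝ (F n))ˣ) : Module.End ℝ (F n)) = tMap n v := rfl
      rw [hval]
      constructor
      · intro h
        have hfix : tMap n (-v) (tMap n v x) = x := by
          rw [← Module.End.mul_apply, tMap_mul, neg_add_cancel, tMap_zero, Module.End.one_apply]
        exact hfix ▸ htr _ (neg_mem_PB hv) _ h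
      · exact htr v hv x
  · intro x
    rw [Units.val_one, Module.End.one_apply]
  · intro a b _ _ ha hb x
    rw [val_mul_apply]
    exact (ha _).trans (hb x)
  · intro g _ hg x
    have h := hg (((g⁻¹ : (Module.End ℝ (F n))ˣ) : Module.End ℝ (F n)) x)
    rw [val_inv_apply] at h
    exact h.symm

lemma WCvee_iff13 (w : (Module.End ℝ (F n))ˣ) (hw : w ∈ WCvee n) (x : F n) :
    (w : Module.End ℝ (F n)) x ∈ S13 n ↔ x ∈ S13 n :=
  gen_iff_aux (fun k h1 h2 x hx => S13_sgen k h1 h2 hx) (fun v hv x hx => S13_t hv hx) w hw x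

lemma WCvee_iff5 (w : (Module.End ℝ (F n))ˣ) (hw : w ∈ WCvee n) (x : F n) :
    (w : Module.End ℝ (F n)) x ∈ S5 n ↔ x ∈ S5 n :=
  gen_iff_aux (fun k h1 h2 x hx => S5_sgen k h1 h2 hx) (fun v hv x hx => S5_t hv hx) w hw x

lemma S13_S5_disjoint : Disjoint (S13 n) (S5 n) := by
  rw [Set.disjoint_left]
  rintro x ⟨j, σ, p, hσ, rfl⟩ ⟨j', k', σ', τ', r, hjk, hσ', hτ', hx⟩
  have h1 := congrArg (fun y : F n => y.1 j') hx
  have h2 := congrArg (fun y : F n => y.1 k') hx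
  simp only [Pi.add_apply, Pi.smul_apply, smul_eq_mul, Pi.single_eq_same] at h1 h2
  rw [Pi.single_eq_of_ne hjk.symm] at h2
  rw [Pi.single_eq_of_ne hjk] at h1
  -- h1 : σ * single j 1 j' = σ' * 1 + τ' * 0 ; h2 : σ * single j 1 k' = σ' * 0 + τ' * 1
  have hj' : j' = j := by
    by_contra hne
    rw [Pi.single_eq_of_ne hne] at h1
    rcases hσ' with rfl | rfl <;> simp at h1
  have hk' : k' = j := by
    by_contra hne
    rw [Pi.single_eq_of_ne hne] at h2
    rcases hτ' with rfl | rfl <;> simp at h2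
  exact hjk (hj'.trans hk'.symm)

end Aux5

section Aux6

variable {n : ℕ}

lemma swap_conj (a b c : Fin n) (hab : a ≠ b) (hac : a ≠ c) (hcb : c ≠ b) (i : Fin n) :
    Equiv.swap c b (Equiv.swap a c (Equiv.swap c b i)) = Equiv.swap a b i := by
  simp only [Equiv.swap_apply_def]
  split_ifs <;> simp_all

lemma exists_swap_aux : ∀ d : ℕ, ∀ a b : Fin n, (b : ℕ) = (a : ℕ) + d + 1 →
    ∃ w ∈ WCvee n, ∀ x : F n,
      (w : Module.End ℝ (F n)) x = (fun i => x.1 (Equiv.swap a b i), x.2) := by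
  intro d
  induction d with
  | zero =>
    intro a b hab
    exact ⟨sgen n ((a:ℕ)+1), sgen_mem _ (by omega) (by have := b.isLt; omega),
      fun x => sgen_adj a b (by omega) x⟩
  | succ d ih =>
    intro a b hab
    have hbn := b.isLt
    set c : Fin n := ⟨(b:ℕ) - 1, by omega⟩ with hcs
    have hc : (c:ℕ) = (b:ℕ) - 1 := by simp [hcs]
    have hab' : a ≠ b := fun h => by rw [h] at hab; omega
    have hac : a ≠ c := fun h => by rw [h] at hab; omega
    have hcb : c ≠ b := fun h => by have := congrArg Fin.val h; omega
    have hw1 : sgen n ((c:ℕ)+1) ∈ WCvee n := sgen_mem _ (by omega) (by omega)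
    have he1 : ∀ x : F n, ((sgen n ((c:ℕ)+1) : (Module.End ℝ (F n))ˣ) : Module.End ℝ (F n)) x
        = (fun i => x.1 (Equiv.swap c b i), x.2) := fun x => sgen_adj c b (by omega) x
    set w1 := sgen n ((c:ℕ)+1) with hw1s
    obtain ⟨w2, hw2, he2⟩ := ih a c (by omega)
    refine ⟨w1 * (w2 * w1), mul_mem hw1 (mul_mem hw2 hw1), ?_⟩
    intro x
    rw [val_mul_apply, val_mul_apply, he1 x, he2 _, he1 _]
    refine Prod.ext ?_ rfl
    funext i
    show x.1 (Equiv.swap c b (Equiv.swap a c (Equiv.swap c b i))) = _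
    rw [swap_conj a b c hab' hac hcb]

lemma exists_swap (a b : Fin n) :
    ∃ w ∈ WCvee n, ∀ x : F n,
      (w : Module.End ℝ (F n)) x = (fun i => x.1 (Equiv.swap a b i), x.2) := by
  rcases lt_trichotomy (a:ℕ) (b:ℕ) with h | h | h
  · exact exists_swap_aux ((b:ℕ) - (a:ℕ) - 1) a b (by omega)
  · have hab : a = b := Fin.ext h
    subst hab
    refine ⟨1, one_mem _, fun x => ?_⟩
    rw [Units.val_one, Module.End.one_apply, Equiv.swap_self]
    rfl
  · obtain ⟨w, hw, he⟩ := exists_swap_aux ((a:ℕ) - (b:ℕ) - 1) b a (by omega)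
    refine ⟨w, hw, fun x => ?_⟩
    rw [he x, Equiv.swap_comm]

lemma exists_sgn (hn : 1 ≤ n) (a : Fin n) :
    ∃ w ∈ WCvee n, ∀ x : F n,
      (w : Module.End ℝ (F n)) x = (fun i => if i = a then -x.1 a else x.1 i, x.2) := by
  set t : Fin n := ⟨n - 1, by omega⟩ with hts
  obtain ⟨ws, hws, hes⟩ := exists_swap a t
  refine ⟨ws * (sgen n n * ws), mul_mem hws (mul_mem (sgen_mem n hn le_rfl) hws), ?_⟩
  intro x
  rw [val_mul_apply, val_mul_apply, hes x, sgen_last hn t (by simp [hts]), hes]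
  refine Prod.ext ?_ rfl
  funext i
  show (if Equiv.swap a t i = t then -x.1 (Equiv.swap a t t) else x.1 (Equiv.swap a t (Equiv.swap a t i)))
      = if i = a then -x.1 a else x.1 i
  rw [Equiv.swap_apply_right, Equiv.swap_apply_self]
  by_cases hia : i = a
  · rw [if_pos (by rw [hia]; exact Equiv.swap_apply_left a t), if_pos hia]
  · have hne : Equiv.swap a t i ≠ t := by
      intro hcon
      apply hia
      have h2 := congrArg (Equiv.swap a t) hcon
      rwa [Equiv.swap_apply_self, Equiv.swap_apply_right] at h2
    rw [if_neg hne, if_neg hia]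

end Aux6

section Aux7

variable {n : ℕ}

lemma to_base13 (hn : 2 ≤ n) {x : F n} (hx : x ∈ S13 n) :
    ∃ w ∈ WCvee n, (w : Module.End ℝ (F n)) x
      = ((Pi.single (⟨0, by omega⟩ : Fin n) (1:ℝ) : Fin n → ℝ), 0) := by
  obtain ⟨j, σ, p, hσ, rfl⟩ := hx
  have hvPB : (fun _ => σ * ((p:ℝ)/2) : Fin n → ℝ) ∈ PB n := by
    rcases hσ with rfl | rfl
    · exact ⟨p, fun i => ⟨0, by push_cast; ring⟩⟩
    · exact ⟨-p, fun i => ⟨0, by push_cast; ring⟩⟩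
  have h1 : tMap n (fun _ => σ * ((p:ℝ)/2))
      ((σ • (Pi.single j (1:ℝ) : Fin n → ℝ), (p:ℝ)/2))
      = (σ • (Pi.single j (1:ℝ) : Fin n → ℝ), 0) := by
    rw [tMap_eq]
    refine Prod.ext rfl ?_
    show (p:ℝ)/2 - ∑ i, (σ • (Pi.single j (1:ℝ) : Fin n → ℝ)) i * (σ * ((p:ℝ)/2)) = 0
    rw [sum_smul_single_mul]
    rcases hσ with rfl | rfl <;> ring
  have h2 : ∃ w2 ∈ WCvee n, (w2 : Module.End ℝ (F n))
      (σ • (Pi.single j (1:ℝ) : Fin n → ℝ), 0)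
      = ((Pi.single j (1:ℝ) : Fin n → ℝ), 0) := by
    rcases hσ with rfl | rfl
    · exact ⟨1, one_mem _, by rw [Units.val_one, Module.End.one_apply, one_smul]⟩
    · obtain ⟨w2, hw2, he2⟩ := exists_sgn (by omega) j
      refine ⟨w2, hw2, ?_⟩
      rw [he2]
      refine Prod.ext ?_ rfl
      funext i
      by_cases hij : i = j
      · subst hij; simp
      · simp [hij, Pi.single_eq_of_ne hij]
  obtain ⟨w2, hw2, he2⟩ := h2
  obtain ⟨w3, hw3, he3⟩ := exists_swap j (⟨0, by omega⟩ : Fin n)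
  refine ⟨w3 * (w2 * tU n (fun _ => σ * ((p:ℝ)/2))),
    mul_mem hw3 (mul_mem hw2 (tU_mem hvPB)), ?_⟩
  rw [val_mul_apply, val_mul_apply]
  have htv : ((tU n (fun _ => σ * ((p:ℝ)/2)) : (Module.End ℝ (F n))ˣ) : Module.End ℝ (F n))
      = tMap n (fun _ => σ * ((p:ℝ)/2)) := rfl
  rw [htv, h1, he2, he3]
  refine Prod.ext ?_ rfl
  funext i
  show (Pi.single j (1:ℝ) : Fin n → ℝ) (Equiv.swap j (⟨0, by omega⟩ : Fin n) i)
      = (Pi.single (⟨0, by omega⟩ : Fin n) (1:ℝ) : Fin n → ℝ) i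
  rw [single_swap, Equiv.swap_apply_left]

lemma to_base5 (hn : 2 ≤ n) {x : F n} (hx : x ∈ S5 n) :
    ∃ w ∈ WCvee n, (w : Module.End ℝ (F n)) x
      = ((Pi.single (⟨0, by omega⟩ : Fin n) (1:ℝ) : Fin n → ℝ)
          + (Pi.single (⟨1, by omega⟩ : Fin n) (1:ℝ) : Fin n → ℝ), 0) := by
  obtain ⟨j, k, σ, τ, r, hjk, hσ, hτ, rfl⟩ := hx
  set z0 : Fin n := ⟨0, by omega⟩ with hz0s
  set z1 : Fin n := ⟨1, by omega⟩ with hz1s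
  have hz01 : z0 ≠ z1 := by
    rw [hz0s, hz1s]
    exact Fin.ne_of_val_ne (by norm_num)
  set v : Fin n → ℝ := fun i => if i = j then σ * r else 0 with hvs
  have hvPB : v ∈ PB n := by
    refine ⟨0, fun i => ?_⟩
    by_cases hij : i = j
    · rcases hσ with rfl | rfl
      · refine ⟨r, ?_⟩
        show (if i = j then (1:ℝ) * r else 0) = (r:ℝ) + ((0:ℤ):ℝ)/2
        rw [if_pos hij]; push_cast; ring
      · refine ⟨-r, ?_⟩
        show (if i = j then (-1:ℝ) * r else 0) = ((-r:ℤ):ℝ) + ((0:ℤ):ℝ)/2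
        rw [if_pos hij]; push_cast; ring
    · refine ⟨0, ?_⟩
      show (if i = j then σ * r else 0) = ((0:ℤ):ℝ) + ((0:ℤ):ℝ)/2
      rw [if_neg hij]; push_cast; ring
  have h1 : tMap n v (σ • (Pi.single j (1:ℝ) : Fin n → ℝ)
        + τ • (Pi.single k (1:ℝ) : Fin n → ℝ), (r:ℝ))
      = (σ • (Pi.single j (1:ℝ) : Fin n → ℝ)
        + τ • (Pi.single k (1:ℝ) : Fin n → ℝ), 0) := by
    rw [tMap_eq]
    refine Prod.ext rfl ?_
    show (r:ℝ) - ∑ i, (σ • (Pi.single j (1:ℝ) : Fin n → ℝ)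
        + τ • (Pi.single k (1:ℝ) : Fin n → ℝ)) i * v i = 0
    rw [sum_pair_mul]
    have hvj : v j = σ * r := by simp [hvs]
    have hvk : v k = 0 := by simp [hvs, Ne.symm hjk]
    rw [hvj, hvk]
    rcases hσ with rfl | rfl <;> ring
  have h2 : ∃ w ∈ WCvee n, (w : Module.End ℝ (F n))
      (σ • (Pi.single j (1:ℝ) : Fin n → ℝ) + τ • (Pi.single k (1:ℝ) : Fin n → ℝ), 0)
      = ((Pi.single j (1:ℝ) : Fin n → ℝ) + τ • (Pi.single k (1:ℝ) : Fin n → ℝ), 0) := by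
    rcases hσ with rfl | rfl
    · exact ⟨1, one_mem _, by rw [Units.val_one, Module.End.one_apply, one_smul]⟩
    · obtain ⟨w, hw, he⟩ := exists_sgn (by omega) j
      refine ⟨w, hw, ?_⟩
      rw [he]
      refine Prod.ext ?_ rfl
      funext i
      by_cases hij : i = j
      · subst hij
        simp [Pi.single_eq_same, Pi.single_eq_of_ne hjk]
      · simp [hij, Pi.single_eq_of_ne hij]
  obtain ⟨w2, hw2, he2⟩ := h2
  have h3 : ∃ w ∈ WCvee n, (w : Module.End ℝ (F n))
      ((Pi.single j (1:ℝ) : Fin n → ℝ) + τ • (Pi.single k (1:ℝ) : Fin n → ℝ), 0)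
      = ((Pi.single j (1:ℝ) : Fin n → ℝ) + (Pi.single k (1:ℝ) : Fin n → ℝ), 0) := by
    rcases hτ with rfl | rfl
    · exact ⟨1, one_mem _, by rw [Units.val_one, Module.End.one_apply, one_smul]⟩
    · obtain ⟨w, hw, he⟩ := exists_sgn (by omega) k
      refine ⟨w, hw, ?_⟩
      rw [he]
      refine Prod.ext ?_ rfl
      funext i
      by_cases hik : i = k
      · subst hik
        simp [Pi.single_eq_same, Pi.single_eq_of_ne (Ne.symm hjk)]
      · simp [hik, Pi.single_eq_of_ne hik]
  obtain ⟨w3, hw3, he3⟩ := h3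
  obtain ⟨w4, hw4, he4⟩ := exists_swap j z0
  set k1 : Fin n := Equiv.swap j z0 k with hk1s
  have h4 : (w4 : Module.End ℝ (F n))
      ((Pi.single j (1:ℝ) : Fin n → ℝ) + (Pi.single k (1:ℝ) : Fin n → ℝ), 0)
      = ((Pi.single z0 (1:ℝ) : Fin n → ℝ) + (Pi.single k1 (1:ℝ) : Fin n → ℝ), 0) := by
    rw [he4]
    refine Prod.ext ?_ rfl
    funext i
    show (Pi.single j (1:ℝ) : Fin n → ℝ) (Equiv.swap j z0 i)
        + (Pi.single k (1:ℝ) : Fin n → ℝ) (Equiv.swap j z0 i)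
        = (Pi.single z0 (1:ℝ) : Fin n → ℝ) i + (Pi.single k1 (1:ℝ) : Fin n → ℝ) i
    rw [single_swap, single_swap, Equiv.swap_apply_left, hk1s]
  have hk1z0 : k1 ≠ z0 := by
    rw [hk1s]
    intro hcon
    apply hjk
    have h := congrArg (Equiv.swap j z0) hcon
    rw [Equiv.swap_apply_self, Equiv.swap_apply_right] at h
    exact h.symm
  obtain ⟨w5, hw5, he5⟩ := exists_swap k1 z1
  have h5 : (w5 : Module.End ℝ (F n))
      ((Pi.single z0 (1:ℝ) : Fin n → ℝ) + (Pi.single k1 (1:ℝ) : Fin n → ℝ), 0)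
      = ((Pi.single z0 (1:ℝ) : Fin n → ℝ) + (Pi.single z1 (1:ℝ) : Fin n → ℝ), 0) := by
    rw [he5]
    refine Prod.ext ?_ rfl
    funext i
    show (Pi.single z0 (1:ℝ) : Fin n → ℝ) (Equiv.swap k1 z1 i)
        + (Pi.single k1 (1:ℝ) : Fin n → ℝ) (Equiv.swap k1 z1 i)
        = (Pi.single z0 (1:ℝ) : Fin n → ℝ) i + (Pi.single z1 (1:ℝ) : Fin n → ℝ) i
    rw [single_swap, single_swap, Equiv.swap_apply_left,
      Equiv.swap_apply_of_ne_of_ne hk1z0.symm hz01]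
  refine ⟨w5 * (w4 * (w3 * (w2 * tU n v))),
    mul_mem hw5 (mul_mem hw4 (mul_mem hw3 (mul_mem hw2 (tU_mem hvPB)))), ?_⟩
  rw [val_mul_apply, val_mul_apply, val_mul_apply, val_mul_apply]
  have htv : ((tU n v : (Module.End ℝ (F n))ˣ) : Module.End ℝ (F n)) = tMap n v := rfl
  rw [htv, h1, he2, he3, h4, h5]

end Aux7


/-- `W^{C∨} = t(P_{B_n}) ⋊ W_0` preserves `S^{C∨} = O_1 ∪ O_3 ∪ O_5`, with
orbits exactly `O_1 ∪ O_3` and `O_5`. -/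
theorem WCvee_orbits (n : ℕ) (hn : 2 ≤ n) :
    (∀ w ∈ WCvee n, ∀ a ∈ O1 n ∪ O3 n, w.val a ∈ O1 n ∪ O3 n) ∧
    (∀ w ∈ WCvee n, ∀ a ∈ O5 n, w.val a ∈ O5 n) ∧
    Disjoint (O1 n ∪ O3 n) (O5 n) ∧
    (∀ a ∈ O1 n ∪ O3 n, ∀ b ∈ O1 n ∪ O3 n, ∃ w ∈ WCvee n, w.val a = b) ∧
    (∀ a ∈ O5 n, ∀ b ∈ O5 n, ∃ w ∈ WCvee n, w.val a = b) := by
  have e13 : O1 n ∪ O3 n = S13 n := O13_eq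
  have e5 : O5 n = S5 n := O5_eq
  refine ⟨?_, ?_, ?_, ?_, ?_⟩
  · intro w hw a ha
    rw [e13] at ha ⊢
    exact (WCvee_iff13 w hw a).mpr ha
  · intro w hw a ha
    rw [e5] at ha ⊢
    exact (WCvee_iff5 w hw a).mpr ha
  · rw [e13, e5]
    exact S13_S5_disjoint
  · intro a ha b hb
    rw [e13] at ha hb
    obtain ⟨wa, hwa, hea⟩ := to_base13 hn ha
    obtain ⟨wb, hwb, heb⟩ := to_base13 hn hb
    refine ⟨wb⁻¹ * wa, mul_mem (inv_mem hwb) hwa, ?_⟩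
    rw [val_mul_apply, hea, ← heb, inv_val_apply]
  · intro a ha b hb
    rw [e5] at ha hb
    obtain ⟨wa, hwa, hea⟩ := to_base5 hn ha
    obtain ⟨wb, hwb, heb⟩ := to_base5 hn hb
    refine ⟨wb⁻¹ * wa, mul_mem (inv_mem hwb) hwa, ?_⟩
    rw [val_mul_apply, hea, ← heb, inv_val_apply]

end CvC
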